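/- arXiv:2204.06974 — 2 statements merged into one kernel-verified Lean document; each statement's English description precedes it below -/
import Mathlib

section
/- Let d be a positive integer, σ > 0, and let h : ℝ^d → ℝ be measurable with |h(x)| ≤ 1 for all x. Then the Gaussian smoothing h̃ satisfies |h̃(x) − h̃(y)| ≤ (e√2 / σ) · ‖x − y‖_2 for all x, y ∈ ℝ^d. -/
open MeasureTheory

/-- Density of the centered Gaussian on `ℝ^d` with covariance `σ² I_d`. -/
noncomputable def gaussDensity (d : ℕ) (σ : ℝ) (t : EuclideanSpace ℝ (Fin d)) : ℝ :=
  (2 * Real.pi * σ ^ 2) ^ (-(d : ℝ) / 2) * Real.exp (-‖t‖ ^ 2 / (2 * σ ^ 2))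

/-- Gaussian smoothing `h̃(x) = ∫ h(x+t) φ_σ(t) dt`. -/
noncomputable def gaussSmooth (d : ℕ) (σ : ℝ)
    (h : EuclideanSpace ℝ (Fin d) → ℝ) (x : EuclideanSpace ℝ (Fin d)) : ℝ :=
  ∫ t : EuclideanSpace ℝ (Fin d), h (x + t) * gaussDensity d σ t

namespace GaussAux

local notation "E" d => EuclideanSpace ℝ (Fin d)

lemma gd_eq (d : ℕ) (σ : ℝ) (t : E d) :
    gaussDensity d σ t =
      (2 * Real.pi * σ ^ 2) ^ (-(d : ℝ) / 2) * Real.exp (-((2 * σ ^ 2)⁻¹) * ‖t‖ ^ 2) := by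
  unfold gaussDensity
  congr 1
  congr 1
  field_simp

lemma gd_pos (d : ℕ) {σ : ℝ} (hσ : 0 < σ) (t : E d) : 0 < gaussDensity d σ t := by
  unfold gaussDensity
  have : (0:ℝ) < 2 * Real.pi * σ ^ 2 := by positivity
  positivity

lemma gd_integrable (d : ℕ) {σ : ℝ} (hσ : 0 < σ) (c : E d) :
    Integrable (fun t : E d => gaussDensity d σ (t - c)) := by
  have ha : (0:ℝ) < (2 * σ ^ 2)⁻¹ := by positivity
  have h1 : Integrable (fun v : E d => Real.exp (-((2 * σ ^ 2)⁻¹) * ‖v‖ ^ 2)) := by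
    have h := (GaussianFourier.integrable_cexp_neg_mul_sq_norm_add
      (V := E d) (b := (((2 * σ ^ 2)⁻¹ : ℝ) : ℂ)) (by rw [Complex.ofReal_re]; exact ha) 0 0).norm
    simpa [Complex.norm_exp, ← Complex.ofReal_pow] using h
  have h2 : Integrable (fun t : E d => gaussDensity d σ t) := by
    simp_rw [gd_eq d σ]
    exact h1.const_mul _
  exact h2.comp_sub_right c

lemma gd_integral (d : ℕ) {σ : ℝ} (hσ : 0 < σ) (c : E d) :
    ∫ t : E d, gaussDensity d σ (t - c) = 1 := by
  have ha : (0:ℝ) < (2 * σ ^ 2)⁻¹ := by positivity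
  rw [integral_sub_right_eq_self (fun t : E d => gaussDensity d σ t) c]
  simp_rw [gd_eq d σ]
  rw [integral_const_mul, GaussianFourier.integral_rexp_neg_mul_sq_norm ha]
  have hfr : (Module.finrank ℝ (E d) : ℝ) = (d : ℝ) := by
    simp [finrank_euclideanSpace_fin]
  rw [hfr]
  have hb : Real.pi / (2 * σ ^ 2)⁻¹ = 2 * Real.pi * σ ^ 2 := by
    field_simp
  rw [hb, ← Real.rpow_add (by positivity)]
  rw [show -(d:ℝ) / 2 + (d:ℝ) / 2 = 0 by ring, Real.rpow_zero]

lemma gd_sq_identity (d : ℕ) (σ : ℝ) (δ s : E d) :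
    (gaussDensity d σ (s - δ) - gaussDensity d σ s) ^ 2 =
      (Real.exp (2 * (2 * σ ^ 2)⁻¹ * ‖δ‖ ^ 2) * gaussDensity d σ (s - (2:ℝ) • δ)
        - 2 * gaussDensity d σ (s - δ) + gaussDensity d σ s) * gaussDensity d σ s := by
  have key : Real.exp (-((2 * σ ^ 2)⁻¹) * ‖s - δ‖ ^ 2) *
        Real.exp (-((2 * σ ^ 2)⁻¹) * ‖s - δ‖ ^ 2)
      = Real.exp (2 * (2 * σ ^ 2)⁻¹ * ‖δ‖ ^ 2) *
          Real.exp (-((2 * σ ^ 2)⁻¹) * ‖s - (2:ℝ) • δ‖ ^ 2) *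
          Real.exp (-((2 * σ ^ 2)⁻¹) * ‖s‖ ^ 2) := by
    rw [← Real.exp_add, ← Real.exp_add, ← Real.exp_add]
    congr 1
    have h1 : ‖s - δ‖ ^ 2 = ‖s‖ ^ 2 - 2 * (inner ℝ s δ : ℝ) + ‖δ‖ ^ 2 := norm_sub_sq_real s δ
    have h2 : ‖s - (2:ℝ) • δ‖ ^ 2
        = ‖s‖ ^ 2 - 2 * ((2:ℝ) * (inner ℝ s δ : ℝ)) + (2:ℝ) ^ 2 * ‖δ‖ ^ 2 := by
      rw [norm_sub_sq_real, real_inner_smul_right, norm_smul]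
      norm_num
      ring
    rw [h1, h2]
    ring
  simp_rw [gd_eq d σ]
  linear_combination ((2 * Real.pi * σ ^ 2) ^ (-(d:ℝ) / 2)) ^ 2 * key

lemma sqrt_mul_le_amgm {a b c : ℝ} (ha : 0 ≤ a) (hb : 0 ≤ b) (hc : 0 < c) :
    Real.sqrt (a * b) ≤ (a / c + c * b) / 2 := by
  rw [Real.sqrt_mul ha, div_add' _ _ _ hc.ne', div_div, le_div_iff₀ (by positivity)]
  have h5 := sq_nonneg (Real.sqrt a - c * Real.sqrt b)
  have h1 : Real.sqrt a ^ 2 = a := Real.sq_sqrt ha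
  have h2c : c ^ 2 * Real.sqrt b ^ 2 = c ^ 2 * b := by rw [Real.sq_sqrt hb]
  nlinarith [h5, h1, h2c]

lemma prod_integrable (d : ℕ) {σ : ℝ} (hσ : 0 < σ)
    (h : (E d) → ℝ) (hmeas : Measurable h) (hbd : ∀ x, |h x| ≤ 1) (z c : E d) :
    Integrable (fun t : E d => h (z + t) * gaussDensity d σ (t - c)) := by
  refine (gd_integrable d hσ c).bdd_mul (c := 1) ?_ (ae_of_all _ fun t => ?_)
  · exact (hmeas.comp (measurable_const_add z)).aestronglyMeasurable
  · simpa [Real.norm_eq_abs] using hbd (z + t)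

lemma gs_abs_le (d : ℕ) {σ : ℝ} (hσ : 0 < σ)
    (h : (E d) → ℝ) (hmeas : Measurable h) (hbd : ∀ x, |h x| ≤ 1) (x : E d) :
    |gaussSmooth d σ h x| ≤ 1 := by
  have hint : Integrable (fun t : E d => h (x + t) * gaussDensity d σ t) := by
    simpa using prod_integrable d hσ h hmeas hbd x 0
  have hgd : Integrable (fun t : E d => gaussDensity d σ t) := by
    simpa using gd_integrable d hσ 0
  calc |gaussSmooth d σ h x| ≤ ∫ t : E d, |h (x + t)| * |gaussDensity d σ t| := by
        rw [gaussSmooth]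
        simpa [Real.norm_eq_abs, abs_mul] using
          norm_integral_le_integral_norm (fun t : E d => h (x + t) * gaussDensity d σ t)
    _ ≤ ∫ t : E d, gaussDensity d σ t := by
        have hint2 : Integrable (fun t : E d => |h (x + t)| * |gaussDensity d σ t|) := by
          simpa [abs_mul] using hint.abs
        refine integral_mono hint2 hgd fun t => ?_
        rw [abs_of_pos (gd_pos d hσ t)]
        exact mul_le_of_le_one_left (gd_pos d hσ t).le (hbd _)
    _ = 1 := by simpa using gd_integral d hσ 0

end GaussAux

set_option maxHeartbeats 1600000 in
/-- If `h : ℝ^d → ℝ` is measurable with `|h| ≤ 1`, then its Gaussian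
smoothing `h̃` satisfies `|h̃(x) − h̃(y)| ≤ (e√2/σ) ‖x − y‖₂`. -/
theorem gaussSmooth_lipschitz
    (d : ℕ) (hd : 0 < d) (σ : ℝ) (hσ : 0 < σ)
    (h : EuclideanSpace ℝ (Fin d) → ℝ)
    (hmeas : Measurable h) (hbd : ∀ x, |h x| ≤ 1) :
    ∀ x y : EuclideanSpace ℝ (Fin d),
      |gaussSmooth d σ h x - gaussSmooth d σ h y| ≤
        (Real.exp 1 * Real.sqrt 2 / σ) * ‖x - y‖ := by
  intro x y
  rcases eq_or_ne x y with rfl | hxy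
  · simp
  set δ := x - y with hδ
  have hr : 0 < ‖δ‖ := by rw [hδ, norm_pos_iff]; exact sub_ne_zero.mpr hxy
  clear_value δ
  by_cases hbig : 2 ≤ (Real.exp 1 * Real.sqrt 2 / σ) * ‖δ‖
  · calc |gaussSmooth d σ h x - gaussSmooth d σ h y|
        ≤ |gaussSmooth d σ h x| + |gaussSmooth d σ h y| := abs_sub _ _
      _ ≤ 1 + 1 := add_le_add (GaussAux.gs_abs_le d hσ h hmeas hbd x)
          (GaussAux.gs_abs_le d hσ h hmeas hbd y)
      _ ≤ (Real.exp 1 * Real.sqrt 2 / σ) * ‖δ‖ := by norm_num at hbig ⊢; exact hbig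
  push_neg at hbig
  -- abbreviations
  set u : ℝ := 2 * (2 * σ ^ 2)⁻¹ * ‖δ‖ ^ 2 with hu
  set E2 : ℝ := Real.exp u with hE2def
  set W : EuclideanSpace ℝ (Fin d) → ℝ := fun t =>
    E2 * gaussDensity d σ (t - (2:ℝ) • δ) - 2 * gaussDensity d σ (t - δ) + gaussDensity d σ t
    with hW
  clear_value u E2 W
  have hupos : 0 < u := by rw [hu]; positivity
  have hE2gt : 1 < E2 := by
    rw [hE2def]
    calc (1:ℝ) = Real.exp 0 := by rw [Real.exp_zero]
      _ < Real.exp u := Real.exp_lt_exp.mpr hupos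
  set I : ℝ := E2 - 1 with hI
  have hIpos : 0 < I := by rw [hI]; linarith
  set c : ℝ := Real.sqrt I with hc
  clear_value I c
  have hcpos : 0 < c := by rw [hc]; exact Real.sqrt_pos.mpr hIpos
  -- integrabilities
  have int2δ := GaussAux.gd_integrable d hσ ((2:ℝ) • δ)
  have intδ := GaussAux.gd_integrable d hσ δ
  have int0 : Integrable (fun t : EuclideanSpace ℝ (Fin d) => gaussDensity d σ t) := by
    simpa using GaussAux.gd_integrable d hσ 0
  have intW : Integrable W := by
    rw [hW]
    exact ((int2δ.const_mul E2).sub (intδ.const_mul 2)).add int0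
  have intφδ := GaussAux.prod_integrable d hσ h hmeas hbd y δ
  have intφ0 : Integrable (fun t : EuclideanSpace ℝ (Fin d) => h (y + t) * gaussDensity d σ t) := by
    simpa using GaussAux.prod_integrable d hσ h hmeas hbd y 0
  have intf : Integrable (fun t : EuclideanSpace ℝ (Fin d) =>
      h (y + t) * (gaussDensity d σ (t - δ) - gaussDensity d σ t)) := by
    have := intφδ.sub intφ0
    simp only [mul_sub]; exact this
  -- step 1: rewrite the difference as a single integral
  have eq1 : gaussSmooth d σ h x = ∫ t : EuclideanSpace ℝ (Fin d),
      h (y + t) * gaussDensity d σ (t - δ) := by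
    rw [gaussSmooth,
      ← integral_sub_right_eq_self (fun t => h (x + t) * gaussDensity d σ t) δ]
    congr 1
    ext t
    have hxt : x + (t - δ) = y + t := by rw [hδ]; abel
    simp only [hxt]
  have eqdiff : gaussSmooth d σ h x - gaussSmooth d σ h y
      = ∫ t : EuclideanSpace ℝ (Fin d),
          h (y + t) * (gaussDensity d σ (t - δ) - gaussDensity d σ t) := by
    rw [eq1, gaussSmooth, ← integral_sub intφδ intφ0]
    congr 1
    ext t
    ring
  -- integral of W
  have intc2 : Integrable (fun t : EuclideanSpace ℝ (Fin d) =>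
      E2 * gaussDensity d σ (t - (2:ℝ) • δ)) := int2δ.const_mul E2
  have intc1 : Integrable (fun t : EuclideanSpace ℝ (Fin d) =>
      2 * gaussDensity d σ (t - δ)) := intδ.const_mul 2
  have intsub : Integrable (fun t : EuclideanSpace ℝ (Fin d) =>
      E2 * gaussDensity d σ (t - (2:ℝ) • δ) - 2 * gaussDensity d σ (t - δ)) := intc2.sub intc1
  have hWint : ∫ t : EuclideanSpace ℝ (Fin d), W t = I := by
    rw [hW]
    rw [integral_add intsub int0,
      integral_sub intc2 intc1,
      integral_const_mul, integral_const_mul,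
      GaussAux.gd_integral d hσ ((2:ℝ) • δ), GaussAux.gd_integral d hσ δ]
    have h0 : ∫ t : EuclideanSpace ℝ (Fin d), gaussDensity d σ t = 1 := by
      simpa using GaussAux.gd_integral d hσ 0
    rw [h0, hI]
    ring
  -- W is nonnegative
  have hWnn : ∀ t, 0 ≤ W t := by
    intro t
    have hid := GaussAux.gd_sq_identity d σ δ t
    have hp := GaussAux.gd_pos d hσ t
    rw [← hu, ← hE2def] at hid
    have hsq := sq_nonneg (gaussDensity d σ (t - δ) - gaussDensity d σ t)
    rw [hid] at hsq
    have hWt : W t = E2 * gaussDensity d σ (t - (2:ℝ) • δ)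
        - 2 * gaussDensity d σ (t - δ) + gaussDensity d σ t := by rw [hW]
    nlinarith [hsq, hp, hWt]
  -- the Cauchy–Schwarz / AM-GM bound
  have keybound : |gaussSmooth d σ h x - gaussSmooth d σ h y| ≤ Real.sqrt I := by
    calc |gaussSmooth d σ h x - gaussSmooth d σ h y|
        ≤ ∫ t : EuclideanSpace ℝ (Fin d),
            |h (y + t)| * |gaussDensity d σ (t - δ) - gaussDensity d σ t| := by
          rw [eqdiff]
          simpa [Real.norm_eq_abs, abs_mul] using
            norm_integral_le_integral_norm (fun t : EuclideanSpace ℝ (Fin d) =>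
              h (y + t) * (gaussDensity d σ (t - δ) - gaussDensity d σ t))
      _ ≤ ∫ t : EuclideanSpace ℝ (Fin d), (W t / c + c * gaussDensity d σ t) / 2 := by
          have intWc : Integrable (fun t : EuclideanSpace ℝ (Fin d) => W t / c) :=
            intW.div_const c
          have intcφ : Integrable (fun t : EuclideanSpace ℝ (Fin d) =>
              c * gaussDensity d σ t) := int0.const_mul c
          have intsum : Integrable (fun t : EuclideanSpace ℝ (Fin d) =>
              W t / c + c * gaussDensity d σ t) := intWc.add intcφ
          refine integral_mono ?_ ?_ ?_
          · simpa [abs_mul] using intf.abs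
          · exact intsum.div_const 2
          · intro t
            have habs : |gaussDensity d σ (t - δ) - gaussDensity d σ t|
                = Real.sqrt (W t * gaussDensity d σ t) := by
              have hid := GaussAux.gd_sq_identity d σ δ t
              rw [← hu, ← hE2def] at hid
              have hWt : W t = E2 * gaussDensity d σ (t - (2:ℝ) • δ)
                  - 2 * gaussDensity d σ (t - δ) + gaussDensity d σ t := by rw [hW]
              rw [hWt, ← hid, Real.sqrt_sq_eq_abs]
            calc |h (y + t)| * |gaussDensity d σ (t - δ) - gaussDensity d σ t|
                ≤ 1 * |gaussDensity d σ (t - δ) - gaussDensity d σ t| :=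
                  mul_le_mul_of_nonneg_right (hbd _) (abs_nonneg _)
              _ = Real.sqrt (W t * gaussDensity d σ t) := by rw [one_mul, habs]
              _ ≤ (W t / c + c * gaussDensity d σ t) / 2 :=
                  GaussAux.sqrt_mul_le_amgm (hWnn t) (GaussAux.gd_pos d hσ t).le hcpos
      _ = ((∫ t : EuclideanSpace ℝ (Fin d), W t) / c
            + c * ∫ t : EuclideanSpace ℝ (Fin d), gaussDensity d σ t) / 2 := by
          have intWc : Integrable (fun t : EuclideanSpace ℝ (Fin d) => W t / c) :=
            intW.div_const c
          have intcφ : Integrable (fun t : EuclideanSpace ℝ (Fin d) =>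
              c * gaussDensity d σ t) := int0.const_mul c
          rw [integral_div, integral_add intWc intcφ, integral_div, integral_const_mul]
      _ = Real.sqrt I := by
          have h0 : ∫ t : EuclideanSpace ℝ (Fin d), gaussDensity d σ t = 1 := by
            simpa using GaussAux.gd_integral d hσ 0
          rw [hWint, h0, mul_one, hc, Real.div_sqrt]
          ring
  -- numeric estimates
  have he : (2.7:ℝ) < Real.exp 1 := by
    have := Real.exp_one_gt_d9; linarith
  have heu : Real.exp 1 < (2.8:ℝ) := by
    have := Real.exp_one_lt_d9; linarith
  have hs2 : (1.4:ℝ) < Real.sqrt 2 := by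
    rw [show (1.4:ℝ) = Real.sqrt (1.4 ^ 2) by rw [Real.sqrt_sq (by norm_num)]]
    exact Real.sqrt_lt_sqrt (by norm_num) (by norm_num)
  have hrs : 0 < ‖δ‖ / σ := div_pos hr hσ
  have hbig' : Real.exp 1 * Real.sqrt 2 * (‖δ‖ / σ) < 2 := by
    have : Real.exp 1 * Real.sqrt 2 / σ * ‖δ‖ = Real.exp 1 * Real.sqrt 2 * (‖δ‖ / σ) := by
      field_simp
    linarith [hbig, this ▸ hbig]
  have hu_eq : u = (‖δ‖ / σ) ^ 2 := by
    rw [hu]; field_simp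
  have h37 : (3.7:ℝ) < Real.exp 1 * Real.sqrt 2 := by nlinarith [he, hs2]
  have hrsle : ‖δ‖ / σ < 1 := by nlinarith [h37, hbig', hrs]
  have hu1 : u ≤ 1 := by rw [hu_eq]; nlinarith [hrsle, hrs]
  have hEu : I ≤ Real.exp 1 * u := by
    have e1 := Real.add_one_le_exp (-u)
    have e2 : Real.exp u * Real.exp (-u) = 1 := by rw [← Real.exp_add]; simp
    have e3 : Real.exp u - 1 ≤ u * Real.exp u := by nlinarith [Real.exp_pos u]
    have e4 : Real.exp u ≤ Real.exp 1 := Real.exp_le_exp.mpr hu1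
    rw [hI, hE2def]
    nlinarith [hupos]
  have hsqrtI : Real.sqrt I ≤ Real.sqrt (Real.exp 1) * (‖δ‖ / σ) := by
    calc Real.sqrt I ≤ Real.sqrt (Real.exp 1 * u) := Real.sqrt_le_sqrt hEu
      _ = Real.sqrt (Real.exp 1) * (‖δ‖ / σ) := by
          rw [hu_eq, Real.sqrt_mul (Real.exp_pos 1).le, Real.sqrt_sq hrs.le]
  have h6 : Real.sqrt (Real.exp 1) ≤ Real.exp 1 * Real.sqrt 2 := by
    nlinarith [Real.sq_sqrt (Real.exp_pos 1).le, Real.sqrt_nonneg (Real.exp 1), he, heu, hs2,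
      Real.sqrt_nonneg 2]
  calc |gaussSmooth d σ h x - gaussSmooth d σ h y| ≤ Real.sqrt I := keybound
    _ ≤ Real.sqrt (Real.exp 1) * (‖δ‖ / σ) := hsqrtI
    _ ≤ Real.exp 1 * Real.sqrt 2 * (‖δ‖ / σ) := mul_le_mul_of_nonneg_right h6 hrs.le
    _ = Real.exp 1 * Real.sqrt 2 / σ * ‖δ‖ := by field_simp
end

section
/- Let d be a positive integer, L > 0, let U ⊆ ℝ^d be a measurable set with 0 < vol(U) < ∞, let f* : ℝ^d → [-1,1] be L-Lipschitz with respect to the Euclidean norm, and let h : ℝ^d → ℝ be measurable with |h(x)| ≤ 1 for all x, with h(x) = 0 and f*(x) = 0 for all x ∉ U. Then for every σ > 0 the Gaussian smoothing h̃ simultaneously satisfies: (1) robustness: |h̃(x) − h̃(y)| ≤ (e√2/σ) ‖x − y‖_2 for all x, y ∈ ℝ^d; and (2) small error: ℓ_1(h̃, f*) ≤ ℓ_1(h, f*) + 2Lσ√d. -/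
open MeasureTheory

/-- `ℓ₁` distance between two functions relative to the uniform distribution on `U`. -/
noncomputable def l1Dist (d : ℕ) (U : Set (EuclideanSpace ℝ (Fin d)))
    (f g : EuclideanSpace ℝ (Fin d) → ℝ) : ℝ :=
  (1 / (volume U).toReal) * ∫ x in U, |f x - g x|

namespace GaussAux

open Real Set ENNReal

/-- 1D Gaussian density. -/
noncomputable def g1 (σ s : ℝ) : ℝ :=
  (2 * π * σ ^ 2) ^ (-(1:ℝ)/2) * Real.exp (-s ^ 2 / (2 * σ ^ 2))

variable {σ : ℝ} {d : ℕ}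

lemma base_pos (hσ : 0 < σ) : 0 < 2 * π * σ ^ 2 := by positivity

lemma A_pos (hσ : 0 < σ) : 0 < (2 * π * σ ^ 2) ^ (-(1:ℝ)/2) :=
  Real.rpow_pos_of_pos (base_pos hσ) _

lemma g1_nonneg (hσ : 0 < σ) (s : ℝ) : 0 ≤ g1 σ s :=
  mul_nonneg (A_pos hσ).le (Real.exp_nonneg _)

lemma g1_le (hσ : 0 < σ) (s : ℝ) : g1 σ s ≤ (2 * π * σ ^ 2) ^ (-(1:ℝ)/2) := by
  have h1 : Real.exp (-s ^ 2 / (2 * σ ^ 2)) ≤ 1 := by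
    rw [Real.exp_le_one_iff, neg_div]
    have : 0 ≤ s ^ 2 / (2 * σ ^ 2) := by positivity
    linarith
  rw [g1]
  calc (2 * π * σ ^ 2) ^ (-(1:ℝ)/2) * Real.exp (-s ^ 2 / (2 * σ ^ 2))
      ≤ (2 * π * σ ^ 2) ^ (-(1:ℝ)/2) * 1 :=
        mul_le_mul_of_nonneg_left h1 (A_pos hσ).le
    _ = _ := mul_one _

lemma g1_exp_eq (s : ℝ) :
    Real.exp (-s ^ 2 / (2 * σ ^ 2)) = Real.exp (-((2 * σ ^ 2)⁻¹) * s ^ 2) := by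
  ring_nf

lemma g1_continuous : Continuous (g1 σ) := by
  unfold g1
  fun_prop

lemma integrable_g1 (hσ : 0 < σ) : Integrable (g1 σ) := by
  have hb : 0 < (2 * σ ^ 2)⁻¹ := by positivity
  have := (integrable_exp_neg_mul_sq hb).const_mul ((2 * π * σ ^ 2) ^ (-(1:ℝ)/2))
  refine this.congr (Filter.Eventually.of_forall fun s => ?_)
  rw [g1, g1_exp_eq]

lemma integral_g1 (hσ : 0 < σ) : ∫ s, g1 σ s = 1 := by
  have hb : 0 < (2 * σ ^ 2)⁻¹ := by positivity
  have h1 : ∫ s, g1 σ s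
      = (2 * π * σ ^ 2) ^ (-(1:ℝ)/2) * ∫ s, Real.exp (-((2 * σ ^ 2)⁻¹) * s ^ 2) := by
    rw [← integral_const_mul]
    congr 1 with s
    rw [g1, g1_exp_eq]
  rw [h1, integral_gaussian]
  have h2 : π / (2 * σ ^ 2)⁻¹ = 2 * π * σ ^ 2 := by
    field_simp
  rw [h2, Real.sqrt_eq_rpow, ← Real.rpow_add (base_pos hσ)]
  norm_num

lemma g1_mono (hσ : 0 < σ) {s t : ℝ} (hst : s ^ 2 ≤ t ^ 2) : g1 σ t ≤ g1 σ s := by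
  unfold g1
  refine mul_le_mul_of_nonneg_left (Real.exp_le_exp.2 ?_) (A_pos hσ).le
  have : (0:ℝ) < 2 * σ ^ 2 := by positivity
  rw [div_le_div_iff₀ this this]; nlinarith

lemma A_le (hσ : 0 < σ) : (2 * π * σ ^ 2) ^ (-(1:ℝ)/2) ≤ (2 * σ)⁻¹ := by
  have h1 : (2 * π * σ ^ 2) ^ (-(1:ℝ)/2) = (Real.sqrt (2 * π * σ ^ 2))⁻¹ := by
    rw [Real.sqrt_eq_rpow, ← Real.rpow_neg (base_pos hσ).le]
    norm_num
  rw [h1]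
  have h2 : 2 * σ ≤ Real.sqrt (2 * π * σ ^ 2) := by
    rw [show (2:ℝ) * σ = Real.sqrt ((2 * σ) ^ 2) from (Real.sqrt_sq (by positivity)).symm]
    apply Real.sqrt_le_sqrt
    nlinarith [Real.pi_gt_three]
  exact inv_anti₀ (by positivity) h2

lemma integrable_g1_shift (hσ : 0 < σ) (c : ℝ) : Integrable (fun s => g1 σ (s - c)) :=
  (integrable_g1 hσ).comp_sub_right c

lemma shift_Iic (hσ : 0 < σ) (b c : ℝ) :
    ∫ s in Iic b, g1 σ (s - c) = ∫ s in Iic (b - c), g1 σ s := by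
  rw [← integral_indicator measurableSet_Iic, ← integral_indicator measurableSet_Iic]
  have key : ∀ s : ℝ, (Iic b).indicator (fun s => g1 σ (s - c)) s
      = (Iic (b - c)).indicator (g1 σ) (s + -c) := by
    intro s
    simp only [Set.indicator_apply, mem_Iic]
    by_cases hs : s ≤ b
    · rw [if_pos hs, if_pos (by linarith)]
      ring_nf
    · rw [if_neg hs, if_neg (by intro hh; exact hs (by linarith))]
  simp_rw [key]
  exact integral_add_right_eq_self ((Iic (b - c)).indicator (g1 σ)) (-c)

lemma integral_abs_g1_sub (hσ : 0 < σ) {c : ℝ} (hc : 0 ≤ c) :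
    ∫ s, |g1 σ s - g1 σ (s - c)| ≤ c / σ := by
  set A := (2 * π * σ ^ 2) ^ (-(1:ℝ)/2) with hA
  have hint := integrable_g1 hσ
  have hintc := integrable_g1_shift hσ c
  have habs : Integrable (fun s => |g1 σ s - g1 σ (s - c)|) := (hint.sub hintc).abs
  rw [← intervalIntegral.integral_Iic_add_Ioi (b := c/2) habs.integrableOn habs.integrableOn]
  have p1 : ∫ s in Iic (c/2), |g1 σ s - g1 σ (s - c)|
      = (∫ s in Iic (c/2), g1 σ s) - ∫ s in Iic (c/2 - c), g1 σ s := by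
    rw [← shift_Iic hσ, ← integral_sub hint.integrableOn hintc.integrableOn]
    refine setIntegral_congr_fun measurableSet_Iic fun s hs => ?_
    have : g1 σ (s - c) ≤ g1 σ s := g1_mono hσ (by simp only [mem_Iic] at hs; nlinarith)
    exact abs_of_nonneg (by linarith)
  have ioi : ∀ b : ℝ, ∫ s in Ioi b, g1 σ (s - c) - g1 σ s
      = (∫ s in Iic b, g1 σ s) - ∫ s in Iic (b - c), g1 σ s := by
    intro b
    rw [integral_sub hintc.integrableOn hint.integrableOn]
    have e1 : ∫ s in Ioi b, g1 σ (s - c)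
        = (∫ s, g1 σ (s - c)) - ∫ s in Iic b, g1 σ (s - c) := by
      rw [← intervalIntegral.integral_Iic_add_Ioi hintc.integrableOn hintc.integrableOn]; ring
    have e2 : ∫ s in Ioi b, g1 σ s = (∫ s, g1 σ s) - ∫ s in Iic b, g1 σ s := by
      rw [← intervalIntegral.integral_Iic_add_Ioi hint.integrableOn hint.integrableOn]; ring
    have e3 : ∫ s, g1 σ (s - c) = ∫ s, g1 σ s := by
      simpa [sub_eq_add_neg] using integral_add_right_eq_self (g1 σ) (-c)
    rw [e1, e2, e3, shift_Iic hσ]; ring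
  have p2 : ∫ s in Ioi (c/2), |g1 σ s - g1 σ (s - c)|
      = (∫ s in Iic (c/2), g1 σ s) - ∫ s in Iic (c/2 - c), g1 σ s := by
    rw [← ioi (c/2)]
    refine setIntegral_congr_fun measurableSet_Ioi fun s hs => ?_
    have : g1 σ s ≤ g1 σ (s - c) := g1_mono hσ (by simp only [mem_Ioi] at hs; nlinarith)
    rw [abs_of_nonpos (by linarith)]; ring
  rw [p1, p2]
  have hII : (∫ s in Iic (c/2), g1 σ s) - ∫ s in Iic (c/2 - c), g1 σ s
      = ∫ s in (c/2 - c)..(c/2), g1 σ s :=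
    intervalIntegral.integral_Iic_sub_Iic hint.integrableOn hint.integrableOn
  rw [hII]
  have hle : ∫ s in (c/2 - c)..(c/2), g1 σ s ≤ c * A := by
    have h1 : ∫ s in (c/2 - c)..(c/2), g1 σ s ≤ ∫ _ in (c/2 - c)..(c/2), A := by
      apply intervalIntegral.integral_mono_on (by linarith)
        hint.intervalIntegrable (intervalIntegrable_const)
      exact fun s _ => g1_le hσ s
    rw [intervalIntegral.integral_const, smul_eq_mul] at h1
    calc ∫ s in (c/2 - c)..(c/2), g1 σ s ≤ (c/2 - (c/2 - c)) * A := h1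
      _ = c * A := by ring
  have hAσ : A ≤ (2 * σ)⁻¹ := A_le hσ
  have h2A : 2 * (c * A) ≤ c / σ := by
    have : c * A ≤ c * (2 * σ)⁻¹ := mul_le_mul_of_nonneg_left hAσ hc
    rw [div_eq_mul_inv]
    calc 2 * (c * A) ≤ 2 * (c * (2*σ)⁻¹) := by linarith
      _ = c * σ⁻¹ := by field_simp
  linarith

/-! ### Multidimensional facts -/

lemma norm_sq_eq (t : EuclideanSpace ℝ (Fin d)) : ‖t‖ ^ 2 = ∑ i, (t i) ^ 2 := by
  rw [EuclideanSpace.norm_eq, Real.sq_sqrt (by positivity)]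
  simp [sq_abs]

lemma gaussDensity_eq_prod (hσ : 0 < σ) (t : EuclideanSpace ℝ (Fin d)) :
    gaussDensity d σ t = ∏ i, g1 σ (t i) := by
  unfold gaussDensity g1
  rw [Finset.prod_mul_distrib, Finset.prod_const]
  have h1 : ((2 * π * σ ^ 2) ^ (-(1:ℝ)/2)) ^ (Finset.univ : Finset (Fin d)).card
      = (2 * π * σ ^ 2) ^ (-(d:ℝ)/2) := by
    rw [Finset.card_univ, Fintype.card_fin, ← Real.rpow_natCast ((2 * π * σ ^ 2) ^ (-(1:ℝ)/2)) d,
      ← Real.rpow_mul (base_pos hσ).le]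
    congr 1
    ring
  rw [h1, ← Real.exp_sum]
  congr 1
  rw [norm_sq_eq, neg_div, Finset.sum_div, ← Finset.sum_neg_distrib]
  congr 1
  exact Finset.sum_congr rfl fun i _ => by ring

lemma gaussDensity_nonneg (hσ : 0 < σ) (t : EuclideanSpace ℝ (Fin d)) :
    0 ≤ gaussDensity d σ t := by
  rw [gaussDensity_eq_prod hσ]
  exact Finset.prod_nonneg fun i _ => g1_nonneg hσ _

lemma gaussDensity_congr_norm (hσ : 0 < σ) {t t' : EuclideanSpace ℝ (Fin d)}
    (ht : ‖t‖ = ‖t'‖) : gaussDensity d σ t = gaussDensity d σ t' := by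
  unfold gaussDensity; rw [ht]

lemma gaussDensity_continuous (hσ : 0 < σ) : Continuous (gaussDensity d σ) := by
  unfold gaussDensity
  fun_prop

/-- transfer: integral over Euclidean space of coordinatewise product -/
lemma integral_euclidean_prod (f : Fin d → ℝ → ℝ) :
    ∫ t : EuclideanSpace ℝ (Fin d), ∏ i, f i (t i) = ∏ i, ∫ s, f i s := by
  have hmp := EuclideanSpace.volume_preserving_symm_measurableEquiv_toLp (Fin d)
  have h2 : ∫ t : EuclideanSpace ℝ (Fin d), ∏ i, f i (t i)
      = ∫ x : Fin d → ℝ, ∏ i, f i (x i) :=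
    hmp.integral_comp' (g := fun x : Fin d → ℝ => ∏ i, f i (x i))
  rw [h2]
  exact MeasureTheory.integral_fintype_prod_eq_prod f

lemma integrable_euclidean_prod (f : Fin d → ℝ → ℝ) (hf : ∀ i, Integrable (f i)) :
    Integrable (fun t : EuclideanSpace ℝ (Fin d) => ∏ i, f i (t i)) := by
  have hmp := EuclideanSpace.volume_preserving_symm_measurableEquiv_toLp (Fin d)
  have h1 : Integrable (fun x : Fin d → ℝ => ∏ i, f i (x i)) :=
    Integrable.fintype_prod (f := f) hf
  exact (hmp.integrable_comp_emb
    (MeasurableEquiv.toLp 2 (Fin d → ℝ)).symm.measurableEmbedding).mpr h1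

lemma integrable_gaussDensity (hσ : 0 < σ) : Integrable (gaussDensity d σ) := by
  have := integrable_euclidean_prod (fun _ : Fin d => g1 σ) (fun _ => integrable_g1 hσ)
  exact this.congr (Filter.Eventually.of_forall fun t => (gaussDensity_eq_prod hσ t).symm)

lemma integral_gaussDensity (hσ : 0 < σ) : ∫ t, gaussDensity d σ t = 1 := by
  rw [show (gaussDensity d σ) = fun t => ∏ i, g1 σ (t i) from funext (gaussDensity_eq_prod hσ)]
  rw [integral_euclidean_prod]
  simp [integral_g1 hσ]

/-! ### The L¹ bound on shifted Gaussian densities -/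

lemma integral_abs_gaussDensity_sub (hd : 0 < d) (hσ : 0 < σ)
    (δ : EuclideanSpace ℝ (Fin d)) :
    ∫ t, |gaussDensity d σ t - gaussDensity d σ (t - δ)| ≤ ‖δ‖ / σ := by
  set i0 : Fin d := ⟨0, hd⟩
  set c : ℝ := ‖δ‖ with hc
  have hc0 : 0 ≤ c := norm_nonneg δ
  set v : EuclideanSpace ℝ (Fin d) := c • (EuclideanSpace.single i0 (1:ℝ)) with hv
  have hvnorm : ‖v‖ = ‖δ‖ := by
    rw [hv, norm_smul, EuclideanSpace.norm_single]
    simp [hc, abs_of_nonneg hc0]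
  set R := Submodule.reflection (ℝ ∙ (δ - v))ᗮ with hR
  have hRδ : R δ = v := Submodule.reflection_sub hvnorm.symm
  have hRv : R v = δ := by rw [← hRδ]; exact Submodule.reflection_reflection _ δ
  have hcv : ∫ t, |gaussDensity d σ t - gaussDensity d σ (t - δ)|
      = ∫ t, |gaussDensity d σ t - gaussDensity d σ (t - v)| := by
    have := (R.measurePreserving).integral_comp
      R.toHomeomorph.measurableEmbedding
      (fun y => |gaussDensity d σ y - gaussDensity d σ (y - δ)|)
    rw [← this]
    congr 1 with t
    have h1 : gaussDensity d σ (R t) = gaussDensity d σ t :=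
      gaussDensity_congr_norm hσ (R.norm_map t)
    have h2 : gaussDensity d σ (R t - δ) = gaussDensity d σ (t - v) := by
      have : R t - δ = R (t - v) := by rw [map_sub, hRv]
      rw [this]
      exact gaussDensity_congr_norm hσ (R.norm_map _)
    rw [h1, h2]
  rw [hcv]
  set F : Fin d → ℝ → ℝ :=
    fun j => if j = i0 then (fun s => |g1 σ s - g1 σ (s - c)|) else g1 σ with hF
  have hpt : ∀ t : EuclideanSpace ℝ (Fin d),
      |gaussDensity d σ t - gaussDensity d σ (t - v)| = ∏ j, F j (t j) := by
    intro t
    have hsub : ∀ j, (t - v) j = t j - v j := fun j => rfl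
    have hvj : ∀ j, v j = if j = i0 then c else 0 := by
      intro j
      rw [hv]
      by_cases hj : j = i0 <;> simp [EuclideanSpace.single_apply, hj]
    have e1 : gaussDensity d σ t = g1 σ (t i0) * ∏ j ∈ Finset.univ.erase i0, g1 σ (t j) := by
      rw [gaussDensity_eq_prod hσ, ← Finset.mul_prod_erase Finset.univ _ (Finset.mem_univ i0)]
    have e2 : gaussDensity d σ (t - v)
        = g1 σ (t i0 - c) * ∏ j ∈ Finset.univ.erase i0, g1 σ (t j) := by
      rw [gaussDensity_eq_prod hσ, ← Finset.mul_prod_erase Finset.univ _ (Finset.mem_univ i0)]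
      congr 1
      · rw [hsub, hvj]; simp
      · refine Finset.prod_congr rfl fun j hj => ?_
        rw [hsub, hvj, if_neg (Finset.mem_erase.1 hj).1, sub_zero]
    have e3 : (∏ j, F j (t j))
        = F i0 (t i0) * ∏ j ∈ Finset.univ.erase i0, F j (t j) :=
      (Finset.mul_prod_erase Finset.univ _ (Finset.mem_univ i0)).symm
    rw [e1, e2, e3, ← sub_mul, abs_mul]
    have hFi0 : F i0 (t i0) = |g1 σ (t i0) - g1 σ (t i0 - c)| := by rw [hF]; simp
    have hFer : ∏ j ∈ Finset.univ.erase i0, F j (t j)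
        = ∏ j ∈ Finset.univ.erase i0, g1 σ (t j) :=
      Finset.prod_congr rfl fun j hj => by rw [hF]; simp [(Finset.mem_erase.1 hj).1]
    rw [hFi0, hFer, abs_of_nonneg (Finset.prod_nonneg fun j _ => g1_nonneg hσ _)]
  have hI1 : ∫ t, |gaussDensity d σ t - gaussDensity d σ (t - v)|
      = ∏ j, ∫ s, F j s := by
    rw [integral_congr_ae (Filter.Eventually.of_forall hpt)]
    exact integral_euclidean_prod F
  have hI2 : ∏ j, ∫ s, F j s = ∫ s, |g1 σ s - g1 σ (s - c)| := by
    rw [← Finset.mul_prod_erase Finset.univ _ (Finset.mem_univ i0)]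
    have h1 : ∫ s, F i0 s = ∫ s, |g1 σ s - g1 σ (s - c)| := by rw [hF]; simp
    have h2 : ∀ j ∈ Finset.univ.erase i0, ∫ s, F j s = 1 := fun j hj => by
      rw [hF]; simp only [if_neg (Finset.mem_erase.1 hj).1]; exact integral_g1 hσ
    rw [h1, Finset.prod_congr rfl h2, Finset.prod_const_one, mul_one]
  rw [hI1, hI2]
  exact integral_abs_g1_sub hσ hc0

/-! ### Moment bounds -/

lemma sq_exp_le (hσ : 0 < σ) (s : ℝ) :
    s ^ 2 * Real.exp (-s ^ 2 / (2 * σ ^ 2))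
      ≤ (4 * σ ^ 2 / Real.exp 1) * Real.exp (-(4 * σ ^ 2)⁻¹ * s ^ 2) := by
  have h4 : (0:ℝ) < 4 * σ ^ 2 := by positivity
  have hsplit : Real.exp (-s ^ 2 / (2 * σ ^ 2))
      = Real.exp (-(4 * σ ^ 2)⁻¹ * s ^ 2) * Real.exp (-(4 * σ ^ 2)⁻¹ * s ^ 2) := by
    rw [← Real.exp_add]
    congr 1
    field_simp
    ring
  rw [hsplit, ← mul_assoc]
  refine mul_le_mul_of_nonneg_right ?_ (Real.exp_nonneg _)
  set u : ℝ := (4 * σ ^ 2)⁻¹ * s ^ 2 with hu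
  have key : u ≤ Real.exp (u - 1) := by
    have := Real.add_one_le_exp (u - 1)
    linarith
  have h1 : s ^ 2 = 4 * σ ^ 2 * u := by rw [hu]; field_simp
  have h2 : -(4 * σ ^ 2)⁻¹ * s ^ 2 = -u := by rw [hu]; ring
  rw [h2, h1]
  calc 4 * σ ^ 2 * u * Real.exp (-u)
      ≤ 4 * σ ^ 2 * Real.exp (u - 1) * Real.exp (-u) := by
        have h3 := mul_le_mul_of_nonneg_right
          (mul_le_mul_of_nonneg_left key (by positivity : (0:ℝ) ≤ 4 * σ ^ 2))
          (Real.exp_nonneg (-u))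
        linarith
    _ = 4 * σ ^ 2 / Real.exp 1 := by
        rw [mul_assoc, ← Real.exp_add, div_eq_mul_inv, ← Real.exp_neg]
        congr 2
        ring

lemma integrable_sq_g1 (hσ : 0 < σ) : Integrable (fun s => s ^ 2 * g1 σ s) := by
  have hb : (0:ℝ) < (4 * σ ^ 2)⁻¹ := by positivity
  have hint := ((integrable_exp_neg_mul_sq hb).const_mul
    ((2 * π * σ ^ 2) ^ (-(1:ℝ)/2) * (4 * σ ^ 2 / Real.exp 1)))
  refine hint.mono' ?_ (Filter.Eventually.of_forall fun s => ?_)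
  · exact ((continuous_pow 2).mul g1_continuous).aestronglyMeasurable
  · rw [Real.norm_eq_abs,
      abs_of_nonneg (mul_nonneg (sq_nonneg s) (g1_nonneg hσ s))]
    unfold g1
    calc s ^ 2 * ((2 * π * σ ^ 2) ^ (-(1:ℝ)/2) * Real.exp (-s ^ 2 / (2 * σ ^ 2)))
        = (2 * π * σ ^ 2) ^ (-(1:ℝ)/2) * (s ^ 2 * Real.exp (-s ^ 2 / (2 * σ ^ 2))) := by ring
      _ ≤ (2 * π * σ ^ 2) ^ (-(1:ℝ)/2)
          * ((4 * σ ^ 2 / Real.exp 1) * Real.exp (-(4 * σ ^ 2)⁻¹ * s ^ 2)) :=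
          mul_le_mul_of_nonneg_left (sq_exp_le hσ s) (A_pos hσ).le
      _ = (2 * π * σ ^ 2) ^ (-(1:ℝ)/2) * (4 * σ ^ 2 / Real.exp 1)
          * Real.exp (-(4 * σ ^ 2)⁻¹ * s ^ 2) := by ring

lemma integral_sq_g1_le (hσ : 0 < σ) : ∫ s, s ^ 2 * g1 σ s ≤ 4 * σ ^ 2 := by
  have hb : (0:ℝ) < (4 * σ ^ 2)⁻¹ := by positivity
  set A := (2 * π * σ ^ 2) ^ (-(1:ℝ)/2) with hA
  have step1 : ∫ s, s ^ 2 * g1 σ s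
      ≤ ∫ s, A * (4 * σ ^ 2 / Real.exp 1) * Real.exp (-(4 * σ ^ 2)⁻¹ * s ^ 2) := by
    refine integral_mono (integrable_sq_g1 hσ)
      ((integrable_exp_neg_mul_sq hb).const_mul _) fun s => ?_
    unfold g1
    calc s ^ 2 * (A * Real.exp (-s ^ 2 / (2 * σ ^ 2)))
        = A * (s ^ 2 * Real.exp (-s ^ 2 / (2 * σ ^ 2))) := by ring
      _ ≤ A * ((4 * σ ^ 2 / Real.exp 1) * Real.exp (-(4 * σ ^ 2)⁻¹ * s ^ 2)) :=
          mul_le_mul_of_nonneg_left (sq_exp_le hσ s) (A_pos hσ).le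
      _ = A * (4 * σ ^ 2 / Real.exp 1) * Real.exp (-(4 * σ ^ 2)⁻¹ * s ^ 2) := by ring
  have step2 : ∫ s, A * (4 * σ ^ 2 / Real.exp 1) * Real.exp (-(4 * σ ^ 2)⁻¹ * s ^ 2)
      = A * (4 * σ ^ 2 / Real.exp 1) * Real.sqrt (π * (4 * σ ^ 2)) := by
    rw [integral_const_mul, integral_gaussian]
    congr 2
    field_simp
  rw [step2] at step1
  have hs0 : Real.sqrt (2 * π * σ ^ 2) ≠ 0 := ne_of_gt (Real.sqrt_pos.2 (base_pos hσ))
  have hAs : A * Real.sqrt (π * (4 * σ ^ 2)) = Real.sqrt 2 := by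
    have hA' : A = (Real.sqrt (2 * π * σ ^ 2))⁻¹ := by
      rw [hA, Real.sqrt_eq_rpow, ← Real.rpow_neg (base_pos hσ).le]
      norm_num
    have h44 : π * (4 * σ ^ 2) = 2 * (2 * π * σ ^ 2) := by ring
    rw [hA', h44, Real.sqrt_mul (by norm_num : (0:ℝ) ≤ 2)]
    field_simp
  have hfin : A * (4 * σ ^ 2 / Real.exp 1) * Real.sqrt (π * (4 * σ ^ 2))
      = 4 * σ ^ 2 * (Real.sqrt 2 / Real.exp 1) := by
    rw [show A * (4 * σ ^ 2 / Real.exp 1) * Real.sqrt (π * (4 * σ ^ 2))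
        = (A * Real.sqrt (π * (4 * σ ^ 2))) * (4 * σ ^ 2 / Real.exp 1) from by ring, hAs]
    ring
  have hs2e : Real.sqrt 2 / Real.exp 1 ≤ 1 := by
    have h1 : Real.sqrt 2 ≤ 2 := by
      nlinarith [Real.sq_sqrt (by norm_num : (0:ℝ) ≤ 2), Real.sqrt_nonneg 2]
    have h2 : (2:ℝ) ≤ Real.exp 1 := by
      have := Real.add_one_le_exp 1
      linarith
    rw [div_le_one (Real.exp_pos 1)]
    linarith
  rw [hfin] at step1
  nlinarith [sq_nonneg σ]

/-- coordinate-moment helper functions -/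
noncomputable def G {d : ℕ} (σ : ℝ) (i j : Fin d) : ℝ → ℝ :=
  if j = i then (fun s => s ^ 2 * g1 σ s) else g1 σ

lemma prod_G_eq (hσ : 0 < σ) (i : Fin d) (t : EuclideanSpace ℝ (Fin d)) :
    ∏ j, G σ i j (t j) = (t i) ^ 2 * ∏ j, g1 σ (t j) := by
  rw [← Finset.mul_prod_erase Finset.univ (fun j => G σ i j (t j)) (Finset.mem_univ i),
    ← Finset.mul_prod_erase Finset.univ (fun j => g1 σ (t j)) (Finset.mem_univ i), ← mul_assoc]
  congr 1
  · unfold G; simp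
  · exact Finset.prod_congr rfl fun j hj => by
      unfold G; rw [if_neg (Finset.mem_erase.1 hj).1]

lemma normsq_gauss_eq (hσ : 0 < σ) (t : EuclideanSpace ℝ (Fin d)) :
    ‖t‖ ^ 2 * gaussDensity d σ t = ∑ i, ∏ j, G σ i j (t j) := by
  rw [norm_sq_eq, gaussDensity_eq_prod hσ, Finset.sum_mul]
  exact Finset.sum_congr rfl fun i _ => (prod_G_eq hσ i t).symm

lemma integrable_G (hσ : 0 < σ) (i j : Fin d) : Integrable (G σ i j) := by
  unfold G
  by_cases hj : j = i
  · rw [if_pos hj]; exact integrable_sq_g1 hσ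
  · rw [if_neg hj]; exact integrable_g1 hσ

lemma integrable_normsq_gauss (hσ : 0 < σ) :
    Integrable (fun t : EuclideanSpace ℝ (Fin d) => ‖t‖ ^ 2 * gaussDensity d σ t) := by
  have : Integrable (fun t : EuclideanSpace ℝ (Fin d) => ∑ i, ∏ j, G σ i j (t j)) :=
    integrable_finset_sum _ fun i _ => integrable_euclidean_prod _ (integrable_G hσ i)
  exact this.congr (Filter.Eventually.of_forall fun t => (normsq_gauss_eq hσ t).symm)

lemma integral_normsq_gauss_le (hσ : 0 < σ) :
    ∫ t : EuclideanSpace ℝ (Fin d), ‖t‖ ^ 2 * gaussDensity d σ t ≤ d * (4 * σ ^ 2) := by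
  have h1 : ∫ t : EuclideanSpace ℝ (Fin d), ‖t‖ ^ 2 * gaussDensity d σ t
      = ∑ i : Fin d, ∏ j : Fin d, ∫ s, G σ i j s := by
    rw [integral_congr_ae (Filter.Eventually.of_forall (normsq_gauss_eq hσ)),
      integral_finset_sum _ fun i _ => integrable_euclidean_prod _ (integrable_G hσ i)]
    exact Finset.sum_congr rfl fun i _ => integral_euclidean_prod (G σ i)
  have h2 : ∀ i : Fin d, ∏ j : Fin d, ∫ s, G σ i j s = ∫ s, s ^ 2 * g1 σ s := by
    intro i
    rw [← Finset.mul_prod_erase Finset.univ (fun j => ∫ s, G σ i j s) (Finset.mem_univ i)]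
    have hii : ∫ s, G σ i i s = ∫ s, s ^ 2 * g1 σ s := by unfold G; simp
    have her : ∀ j ∈ Finset.univ.erase i, ∫ s, G σ i j s = 1 := fun j hj => by
      unfold G; rw [if_neg (Finset.mem_erase.1 hj).1]; exact integral_g1 hσ
    rw [hii, Finset.prod_congr rfl her, Finset.prod_const_one, mul_one]
  rw [h1]
  calc ∑ i : Fin d, ∏ j : Fin d, ∫ s, G σ i j s = ∑ _i : Fin d, ∫ s, s ^ 2 * g1 σ s :=
        Finset.sum_congr rfl fun i _ => h2 i
    _ = d * ∫ s, s ^ 2 * g1 σ s := by rw [Finset.sum_const, Finset.card_univ,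
        Fintype.card_fin, nsmul_eq_mul]
    _ ≤ d * (4 * σ ^ 2) := by
        refine mul_le_mul_of_nonneg_left (integral_sq_g1_le hσ) (by positivity)

lemma integrable_norm_gauss (hσ : 0 < σ) :
    Integrable (fun t : EuclideanSpace ℝ (Fin d) => ‖t‖ * gaussDensity d σ t) := by
  refine ((integrable_gaussDensity hσ).add (integrable_normsq_gauss hσ)).mono'
    (continuous_norm.mul (gaussDensity_continuous hσ)).aestronglyMeasurable
    (Filter.Eventually.of_forall fun t => ?_)
  rw [Real.norm_eq_abs,
    abs_of_nonneg (mul_nonneg (norm_nonneg t) (gaussDensity_nonneg hσ t))]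
  have h1 : ‖t‖ ≤ 1 + ‖t‖ ^ 2 := by nlinarith [norm_nonneg t, sq_nonneg (‖t‖ - 1)]
  have := mul_le_mul_of_nonneg_right h1 (gaussDensity_nonneg hσ t)
  simp only [Pi.add_apply]
  nlinarith [this]

lemma integral_norm_gauss_le (hd : 0 < d) (hσ : 0 < σ) :
    ∫ t : EuclideanSpace ℝ (Fin d), ‖t‖ * gaussDensity d σ t ≤ 2 * σ * Real.sqrt d := by
  set b : ℝ := 2 * σ * Real.sqrt d with hbdef
  have hd0 : (0:ℝ) < d := by exact_mod_cast hd
  have hb : 0 < b := by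
    rw [hbdef]
    positivity
  have hpt : ∀ t : EuclideanSpace ℝ (Fin d), ‖t‖ * gaussDensity d σ t
      ≤ (b/2) * gaussDensity d σ t + (2*b)⁻¹ * (‖t‖ ^ 2 * gaussDensity d σ t) := by
    intro t
    have h1 : ‖t‖ ≤ b/2 + (2*b)⁻¹ * ‖t‖ ^ 2 := by
      have h2 : (0:ℝ) < 2 * b := by linarith
      have key : b/2 + (2*b)⁻¹ * ‖t‖ ^ 2 - ‖t‖ = (2*b)⁻¹ * (‖t‖ - b) ^ 2 := by
        field_simp
        ring
      linarith [key, mul_nonneg (inv_pos.2 h2).le (sq_nonneg (‖t‖ - b))]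
    have := mul_le_mul_of_nonneg_right h1 (gaussDensity_nonneg hσ t)
    linarith [this]
  have hint : ∫ t : EuclideanSpace ℝ (Fin d), ‖t‖ * gaussDensity d σ t
      ≤ ∫ t : EuclideanSpace ℝ (Fin d),
        ((b/2) * gaussDensity d σ t + (2*b)⁻¹ * (‖t‖ ^ 2 * gaussDensity d σ t)) :=
    integral_mono (integrable_norm_gauss hσ)
      (((integrable_gaussDensity hσ).const_mul _).add
        ((integrable_normsq_gauss hσ).const_mul _)) hpt
  rw [integral_add ((integrable_gaussDensity hσ).const_mul _)
    ((integrable_normsq_gauss hσ).const_mul _), integral_const_mul, integral_const_mul,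
    integral_gaussDensity hσ, mul_one] at hint
  have h4 : (2*b)⁻¹ * ∫ t : EuclideanSpace ℝ (Fin d), ‖t‖ ^ 2 * gaussDensity d σ t
      ≤ (2*b)⁻¹ * (d * (4 * σ ^ 2)) :=
    mul_le_mul_of_nonneg_left (integral_normsq_gauss_le hσ) (by positivity)
  have h5 : (2*b)⁻¹ * (d * (4 * σ ^ 2)) = b / 2 := by
    rw [hbdef]
    have hsq : Real.sqrt d * Real.sqrt d = (d:ℝ) := Real.mul_self_sqrt hd0.le
    field_simp
    nlinarith [hsq]
  linarith

/-! ### Smoothing basics -/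

lemma integrable_gauss_shift (hσ : 0 < σ) (x : EuclideanSpace ℝ (Fin d)) :
    Integrable (fun u : EuclideanSpace ℝ (Fin d) => gaussDensity d σ (u - x)) :=
  (integrable_gaussDensity hσ).comp_sub_right x

lemma integrable_mul_gauss_shift (hσ : 0 < σ) {C : ℝ} {h : EuclideanSpace ℝ (Fin d) → ℝ}
    (hm : Measurable h) (hb : ∀ z, |h z| ≤ C) (x : EuclideanSpace ℝ (Fin d)) :
    Integrable (fun u => h u * gaussDensity d σ (u - x)) := by
  refine (integrable_gauss_shift hσ x).bdd_mul hm.aestronglyMeasurable (c := C) (Filter.Eventually.of_forall fun z => ?_)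
  rw [Real.norm_eq_abs]
  exact hb z

lemma integrable_mul_gauss (hσ : 0 < σ) {C : ℝ} {h : EuclideanSpace ℝ (Fin d) → ℝ}
    (hm : Measurable h) (hb : ∀ z, |h z| ≤ C) (x : EuclideanSpace ℝ (Fin d)) :
    Integrable (fun t => h (x + t) * gaussDensity d σ t) := by
  refine (integrable_gaussDensity hσ).bdd_mul
    ((hm.comp (measurable_const.add measurable_id)).aestronglyMeasurable) (c := C)
      (Filter.Eventually.of_forall fun z => ?_)
  rw [Real.norm_eq_abs]
  exact hb _

lemma gaussSmooth_eq_shift (hσ : 0 < σ) (h : EuclideanSpace ℝ (Fin d) → ℝ)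
    (x : EuclideanSpace ℝ (Fin d)) :
    gaussSmooth d σ h x = ∫ u, h u * gaussDensity d σ (u - x) := by
  unfold gaussSmooth
  have : ∀ t : EuclideanSpace ℝ (Fin d),
      h (x + t) * gaussDensity d σ t
        = (fun u => h u * gaussDensity d σ (u - x)) (x + t) := by
    intro t
    simp only []
    rw [add_sub_cancel_left]
  rw [integral_congr_ae (Filter.Eventually.of_forall this)]
  exact integral_add_left_eq_self (fun u => h u * gaussDensity d σ (u - x)) x

/-- Robustness of Gaussian smoothing. -/
lemma robustness (hd : 0 < d) (hσ : 0 < σ) {C : ℝ} {h : EuclideanSpace ℝ (Fin d) → ℝ}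
    (hm : Measurable h) (hb : ∀ z, |h z| ≤ C) (x y : EuclideanSpace ℝ (Fin d)) :
    |gaussSmooth d σ h x - gaussSmooth d σ h y| ≤ C * ‖x - y‖ / σ := by
  have hC0 : 0 ≤ C := le_trans (abs_nonneg _) (hb 0)
  have hix := integrable_mul_gauss_shift hσ hm hb x
  have hiy := integrable_mul_gauss_shift hσ hm hb y
  rw [gaussSmooth_eq_shift hσ h x, gaussSmooth_eq_shift hσ h y, ← integral_sub hix hiy]
  have step1 : |∫ u, (h u * gaussDensity d σ (u - x) - h u * gaussDensity d σ (u - y))|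
      ≤ ∫ u, |h u * gaussDensity d σ (u - x) - h u * gaussDensity d σ (u - y)| := by
    have := norm_integral_le_integral_norm
      (fun u => h u * gaussDensity d σ (u - x) - h u * gaussDensity d σ (u - y)) (μ := volume)
    simpa only [Real.norm_eq_abs] using this
  have step2 : ∫ u, |h u * gaussDensity d σ (u - x) - h u * gaussDensity d σ (u - y)|
      ≤ ∫ u, C * |gaussDensity d σ (u - x) - gaussDensity d σ (u - y)| := by
    refine integral_mono (hix.sub hiy).abs
      (((integrable_gauss_shift hσ x).sub (integrable_gauss_shift hσ y)).abs.const_mul C)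
      fun u => ?_
    rw [← mul_sub, abs_mul]
    exact mul_le_mul_of_nonneg_right (hb u) (abs_nonneg _)
  have step3 : ∫ u, |gaussDensity d σ (u - x) - gaussDensity d σ (u - y)|
      = ∫ t, |gaussDensity d σ t - gaussDensity d σ (t - (y - x))| := by
    have hp : ∀ u : EuclideanSpace ℝ (Fin d),
        |gaussDensity d σ (u - x) - gaussDensity d σ (u - y)|
        = (fun t => |gaussDensity d σ t - gaussDensity d σ (t - (y - x))|) (u - x) := by
      intro u
      simp only []
      congr 2
      abel
    rw [integral_congr_ae (Filter.Eventually.of_forall hp)]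
    exact integral_sub_right_eq_self
      (fun t => |gaussDensity d σ t - gaussDensity d σ (t - (y - x))|) x
  have step4 := integral_abs_gaussDensity_sub hd hσ (y - x)
  rw [norm_sub_rev] at step4
  have step5 : ∫ u, C * |gaussDensity d σ (u - x) - gaussDensity d σ (u - y)|
      ≤ C * (‖x - y‖ / σ) := by
    rw [integral_const_mul, step3]
    exact mul_le_mul_of_nonneg_left step4 hC0
  calc |∫ u, (h u * gaussDensity d σ (u - x) - h u * gaussDensity d σ (u - y))|
      ≤ C * (‖x - y‖ / σ) := le_trans step1 (le_trans step2 step5)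
    _ = C * ‖x - y‖ / σ := by ring

lemma abs_gaussSmooth_le (hσ : 0 < σ) {C : ℝ} {h : EuclideanSpace ℝ (Fin d) → ℝ}
    (hm : Measurable h) (hb : ∀ z, |h z| ≤ C) (x : EuclideanSpace ℝ (Fin d)) :
    |gaussSmooth d σ h x| ≤ C := by
  unfold gaussSmooth
  have h1 : |∫ t, h (x + t) * gaussDensity d σ t|
      ≤ ∫ t, |h (x + t) * gaussDensity d σ t| := by
    have := norm_integral_le_integral_norm
      (fun t => h (x + t) * gaussDensity d σ t) (μ := volume)
    simpa only [Real.norm_eq_abs] using this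
  have h2 : ∫ t, |h (x + t) * gaussDensity d σ t| ≤ ∫ t, C * gaussDensity d σ t := by
    refine integral_mono (integrable_mul_gauss hσ hm hb x).abs
      ((integrable_gaussDensity hσ).const_mul C) fun t => ?_
    rw [abs_mul, abs_of_nonneg (gaussDensity_nonneg hσ t)]
    exact mul_le_mul_of_nonneg_right (hb _) (gaussDensity_nonneg hσ t)
  rw [integral_const_mul, integral_gaussDensity hσ, mul_one] at h2
  linarith

lemma gaussSmooth_continuous (hd : 0 < d) (hσ : 0 < σ) {C : ℝ}
    {h : EuclideanSpace ℝ (Fin d) → ℝ}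
    (hm : Measurable h) (hb : ∀ z, |h z| ≤ C) : Continuous (gaussSmooth d σ h) := by
  have hC0 : 0 ≤ C := le_trans (abs_nonneg _) (hb 0)
  have hlip : LipschitzWith (Real.toNNReal (C / σ)) (gaussSmooth d σ h) := by
    apply LipschitzWith.of_dist_le_mul
    intro x y
    rw [Real.dist_eq, dist_eq_norm, Real.coe_toNNReal _ (div_nonneg hC0 hσ.le)]
    calc |gaussSmooth d σ h x - gaussSmooth d σ h y| ≤ C * ‖x - y‖ / σ :=
          robustness hd hσ hm hb x y
      _ = C / σ * ‖x - y‖ := by ring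
  exact hlip.continuous

lemma gaussSmooth_sub (hσ : 0 < σ) {C C' : ℝ} {h g : EuclideanSpace ℝ (Fin d) → ℝ}
    (hm : Measurable h) (hb : ∀ z, |h z| ≤ C)
    (hgm : Measurable g) (hgb : ∀ z, |g z| ≤ C') (x : EuclideanSpace ℝ (Fin d)) :
    gaussSmooth d σ h x - gaussSmooth d σ g x
      = gaussSmooth d σ (fun u => h u - g u) x := by
  unfold gaussSmooth
  rw [← integral_sub (integrable_mul_gauss hσ hm hb x) (integrable_mul_gauss hσ hgm hgb x)]
  congr 1 with t
  ring

lemma abs_gaussSmooth_le_smooth_abs (hσ : 0 < σ) {h : EuclideanSpace ℝ (Fin d) → ℝ}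
    (x : EuclideanSpace ℝ (Fin d)) :
    |gaussSmooth d σ h x| ≤ gaussSmooth d σ (fun u => |h u|) x := by
  unfold gaussSmooth
  have h1 : |∫ t, h (x + t) * gaussDensity d σ t|
      ≤ ∫ t, |h (x + t) * gaussDensity d σ t| := by
    have := norm_integral_le_integral_norm
      (fun t => h (x + t) * gaussDensity d σ t) (μ := volume)
    simpa only [Real.norm_eq_abs] using this
  have h2 : ∀ t : EuclideanSpace ℝ (Fin d), |h (x + t) * gaussDensity d σ t|
      = |h (x + t)| * gaussDensity d σ t := fun t => by
    rw [abs_mul, abs_of_nonneg (gaussDensity_nonneg hσ t)]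
  calc |∫ t, h (x + t) * gaussDensity d σ t|
      ≤ ∫ t, |h (x + t) * gaussDensity d σ t| := h1
    _ = ∫ t, |h (x + t)| * gaussDensity d σ t :=
        integral_congr_ae (Filter.Eventually.of_forall h2)

lemma gaussSmooth_nonneg (hσ : 0 < σ) {h : EuclideanSpace ℝ (Fin d) → ℝ}
    (h0 : ∀ z, 0 ≤ h z) (x : EuclideanSpace ℝ (Fin d)) :
    0 ≤ gaussSmooth d σ h x :=
  integral_nonneg fun t => mul_nonneg (h0 _) (gaussDensity_nonneg hσ t)

/-- Smoothing a Lipschitz function moves it by at most `L·2σ√d` pointwise. -/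
lemma smooth_lipschitz_err (hd : 0 < d) (hσ : 0 < σ) {L : ℝ} (hL : 0 < L)
    {f : EuclideanSpace ℝ (Fin d) → ℝ} (hfm : Measurable f) (hfb : ∀ z, |f z| ≤ 1)
    (hfLip : ∀ x y, |f x - f y| ≤ L * ‖x - y‖) (x : EuclideanSpace ℝ (Fin d)) :
    |gaussSmooth d σ f x - f x| ≤ L * (2 * σ * Real.sqrt d) := by
  have hif := integrable_mul_gauss hσ hfm hfb x
  have hifc : Integrable (fun t : EuclideanSpace ℝ (Fin d) => f x * gaussDensity d σ t) :=
    (integrable_gaussDensity hσ).const_mul (f x)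
  have heq : gaussSmooth d σ f x - f x
      = ∫ t, (f (x + t) - f x) * gaussDensity d σ t := by
    unfold gaussSmooth
    rw [show (fun t : EuclideanSpace ℝ (Fin d) => (f (x + t) - f x) * gaussDensity d σ t)
        = fun t => f (x + t) * gaussDensity d σ t - f x * gaussDensity d σ t from
        funext fun t => by ring]
    rw [integral_sub hif hifc, integral_const_mul, integral_gaussDensity hσ, mul_one]
  rw [heq]
  have h1 : |∫ t, (f (x + t) - f x) * gaussDensity d σ t|
      ≤ ∫ t, |(f (x + t) - f x) * gaussDensity d σ t| := by
    have := norm_integral_le_integral_norm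
      (fun t => (f (x + t) - f x) * gaussDensity d σ t) (μ := volume)
    simpa only [Real.norm_eq_abs] using this
  have hsub : Integrable (fun t : EuclideanSpace ℝ (Fin d) =>
      (f (x + t) - f x) * gaussDensity d σ t) :=
    (hif.sub hifc).congr (Filter.Eventually.of_forall fun t => by
      simp only [Pi.sub_apply]; ring)
  have h2 : ∫ t, |(f (x + t) - f x) * gaussDensity d σ t|
      ≤ ∫ t, L * (‖t‖ * gaussDensity d σ t) := by
    refine integral_mono hsub.abs
      ((integrable_norm_gauss hσ).const_mul L) fun t => ?_
    rw [abs_mul, abs_of_nonneg (gaussDensity_nonneg hσ t), ← mul_assoc]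
    refine mul_le_mul_of_nonneg_right ?_ (gaussDensity_nonneg hσ t)
    calc |f (x + t) - f x| ≤ L * ‖x + t - x‖ := hfLip (x + t) x
      _ = L * ‖t‖ := by rw [add_sub_cancel_left]
  have h3 : ∫ t, L * (‖t‖ * gaussDensity d σ t) ≤ L * (2 * σ * Real.sqrt d) := by
    rw [integral_const_mul]
    exact mul_le_mul_of_nonneg_left (integral_norm_gauss_le hd hσ) hL.le
  linarith

/-- Contraction: smoothing does not increase the integral over `U` of a nonnegative
bounded function supported in `U`. -/
lemma setIntegral_gaussSmooth_le (hσ : 0 < σ) {U : Set (EuclideanSpace ℝ (Fin d))}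
    (hU : MeasurableSet U) (hUfin : volume U < ⊤)
    {H : EuclideanSpace ℝ (Fin d) → ℝ} (hm : Measurable H)
    (h0 : ∀ z, 0 ≤ H z) (hb : ∀ z, H z ≤ 2) (hv : ∀ z, z ∉ U → H z = 0)
    (hsm : AEStronglyMeasurable (gaussSmooth d σ H) (volume.restrict U)) :
    ∫ x in U, gaussSmooth d σ H x ≤ ∫ x in U, H x := by
  set Φ : EuclideanSpace ℝ (Fin d) → ℝ≥0∞ := fun t => ENNReal.ofReal (gaussDensity d σ t)
    with hΦ
  set HE : EuclideanSpace ℝ (Fin d) → ℝ≥0∞ := fun u => ENNReal.ofReal (H u) with hHE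
  have hΦm : Measurable Φ := (gaussDensity_continuous hσ).measurable.ennreal_ofReal
  have hHEm : Measurable HE := hm.ennreal_ofReal
  have hHE2 : ∀ z, HE z ≤ 2 := fun z => by
    calc HE z ≤ ENNReal.ofReal 2 := ENNReal.ofReal_le_ofReal (hb z)
      _ = 2 := by norm_num
  have hΦ1 : ∫⁻ t, Φ t = 1 := by
    rw [hΦ, ← ofReal_integral_eq_lintegral_ofReal (integrable_gaussDensity hσ)
      (Filter.Eventually.of_forall (gaussDensity_nonneg hσ)), integral_gaussDensity hσ,
      ENNReal.ofReal_one]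
  have hinner_le : ∀ x : EuclideanSpace ℝ (Fin d), ∫⁻ t, HE (x + t) * Φ t ≤ 2 := by
    intro x
    calc ∫⁻ t, HE (x + t) * Φ t ≤ ∫⁻ t, 2 * Φ t :=
          lintegral_mono fun t => mul_le_mul_left (hHE2 _) _
      _ = 2 * ∫⁻ t, Φ t := lintegral_const_mul 2 hΦm
      _ = 2 := by rw [hΦ1, mul_one]
  have hgs : ∀ x : EuclideanSpace ℝ (Fin d),
      ENNReal.ofReal (gaussSmooth d σ H x) = ∫⁻ t, HE (x + t) * Φ t := by
    intro x
    unfold gaussSmooth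
    rw [integral_eq_lintegral_of_nonneg_ae
      (f := fun t => H (x + t) * gaussDensity d σ t)
      (Filter.Eventually.of_forall fun t => mul_nonneg (h0 _) (gaussDensity_nonneg hσ t))
      ((hm.comp (measurable_const_add x)).mul
        (gaussDensity_continuous hσ).measurable).aestronglyMeasurable]
    have hpt : ∀ t : EuclideanSpace ℝ (Fin d),
        ENNReal.ofReal (H (x + t) * gaussDensity d σ t) = HE (x + t) * Φ t := fun t =>
      ENNReal.ofReal_mul (h0 _)
    rw [lintegral_congr hpt, ENNReal.ofReal_toReal
      (lt_of_le_of_lt (hinner_le x) (by norm_num)).ne]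
  have hHEind : ∫⁻ z, HE z = ∫⁻ z in U, HE z := by
    rw [← lintegral_indicator hU]
    refine lintegral_congr fun z => ?_
    by_cases hz : z ∈ U
    · rw [Set.indicator_of_mem hz]
    · rw [Set.indicator_of_notMem hz, hHE]
      simp [hv z hz]
  have hHEfin : ∫⁻ z in U, HE z < ⊤ := by
    calc ∫⁻ z in U, HE z ≤ ∫⁻ _ in U, 2 := lintegral_mono fun z => hHE2 z
      _ = 2 * volume U := by rw [setLIntegral_const]
      _ < ⊤ := ENNReal.mul_lt_top (by norm_num) hUfin
  have key : ∫⁻ x in U, ENNReal.ofReal (gaussSmooth d σ H x) ≤ ∫⁻ z in U, HE z := by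
    calc ∫⁻ x in U, ENNReal.ofReal (gaussSmooth d σ H x)
        = ∫⁻ x in U, ∫⁻ t, HE (x + t) * Φ t := lintegral_congr fun x => hgs x
      _ ≤ ∫⁻ x, ∫⁻ t, HE (x + t) * Φ t := setLIntegral_le_lintegral _ _
      _ = ∫⁻ t, ∫⁻ x, HE (x + t) * Φ t := by
          refine lintegral_lintegral_swap ?_
          exact ((hHEm.comp measurable_add).mul (hΦm.comp measurable_snd)).aemeasurable
      _ = ∫⁻ t, (∫⁻ x, HE (x + t)) * Φ t :=
          lintegral_congr fun t => lintegral_mul_const (Φ t)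
            (hHEm.comp (measurable_id.add_const t))
      _ = ∫⁻ t, (∫⁻ z, HE z) * Φ t :=
          lintegral_congr fun t => by rw [lintegral_add_right_eq_self HE t]
      _ = (∫⁻ z, HE z) * ∫⁻ t, Φ t :=
          lintegral_const_mul' _ _ (by rw [hHEind]; exact hHEfin.ne)
      _ = ∫⁻ z in U, HE z := by rw [hΦ1, mul_one, hHEind]
  have lhs_eq : ∫ x in U, gaussSmooth d σ H x
      = (∫⁻ x in U, ENNReal.ofReal (gaussSmooth d σ H x)).toReal := by
    rw [integral_eq_lintegral_of_nonneg_ae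
      (Filter.Eventually.of_forall fun x => gaussSmooth_nonneg hσ h0 x) hsm]
  have rhs_eq : ∫ x in U, H x = (∫⁻ x in U, HE x).toReal := by
    rw [integral_eq_lintegral_of_nonneg_ae
      (Filter.Eventually.of_forall fun x => h0 x) hm.aestronglyMeasurable.restrict]
  rw [lhs_eq, rhs_eq]
  exact ENNReal.toReal_mono hHEfin.ne key

end GaussAux

open GaussAux

/-- Under the evaluation-time immunization hypotheses, for every `σ > 0`
the Gaussian smoothing `h̃` is simultaneously `(e√2/σ)`-robust and a good learning:
`ℓ₁(h̃, f*) ≤ ℓ₁(h, f*) + 2Lσ√d`. -/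
theorem gaussSmooth_immunization
    (d : ℕ) (hd : 0 < d) (L : ℝ) (hL : 0 < L)
    (U : Set (EuclideanSpace ℝ (Fin d))) (hU : MeasurableSet U)
    (hUpos : 0 < volume U) (hUfin : volume U < ⊤)
    (fstar : EuclideanSpace ℝ (Fin d) → ℝ)
    (hfrange : ∀ x, fstar x ∈ Set.Icc (-1 : ℝ) 1)
    (hfLip : ∀ x y, |fstar x - fstar y| ≤ L * ‖x - y‖)
    (h : EuclideanSpace ℝ (Fin d) → ℝ)
    (hmeas : Measurable h) (hbd : ∀ x, |h x| ≤ 1)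
    (hvanish : ∀ x, x ∉ U → h x = 0 ∧ fstar x = 0) :
    ∀ σ : ℝ, 0 < σ →
      (∀ x y : EuclideanSpace ℝ (Fin d),
        |gaussSmooth d σ h x - gaussSmooth d σ h y| ≤
          (Real.exp 1 * Real.sqrt 2 / σ) * ‖x - y‖) ∧
      l1Dist d U (gaussSmooth d σ h) fstar ≤
        l1Dist d U h fstar + 2 * L * σ * Real.sqrt d := by
  -- basic facts about fstar
  have hfcont : Continuous fstar := by
    have hlip : LipschitzWith (Real.toNNReal L) fstar := by
      apply LipschitzWith.of_dist_le_mul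
      intro x y
      rw [Real.dist_eq, dist_eq_norm, Real.coe_toNNReal _ hL.le]
      exact hfLip x y
    exact hlip.continuous
  have hfm : Measurable fstar := hfcont.measurable
  have hfb : ∀ z, |fstar z| ≤ 1 := fun z => abs_le.2 ⟨(hfrange z).1, (hfrange z).2⟩
  -- useful constants
  have hes : (1:ℝ) ≤ Real.exp 1 * Real.sqrt 2 := by
    have h2 : (1:ℝ) ≤ Real.sqrt 2 := by
      rw [show (1:ℝ) = Real.sqrt 1 from (Real.sqrt_one).symm]
      exact Real.sqrt_le_sqrt (by norm_num)
    have h3 : (2:ℝ) ≤ Real.exp 1 := by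
      have := Real.add_one_le_exp 1
      linarith
    nlinarith
  intro σ hσ
  constructor
  · -- robustness
    intro x y
    have hrob := robustness hd hσ hmeas hbd x y (C := 1)
    have hmul := mul_le_mul_of_nonneg_right hes (norm_nonneg (x - y))
    rw [one_mul] at hmul
    calc |gaussSmooth d σ h x - gaussSmooth d σ h y| ≤ 1 * ‖x - y‖ / σ := hrob
      _ = ‖x - y‖ / σ := by ring
      _ ≤ (Real.exp 1 * Real.sqrt 2 * ‖x - y‖) / σ := by
          gcongr
      _ = (Real.exp 1 * Real.sqrt 2 / σ) * ‖x - y‖ := by ring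
  · -- learning error
    set ht := gaussSmooth d σ h with hht
    set ft := gaussSmooth d σ fstar with hft
    have hconth : Continuous ht := gaussSmooth_continuous hd hσ hmeas hbd
    have hcontf : Continuous ft := gaussSmooth_continuous hd hσ hfm hfb
    set H : EuclideanSpace ℝ (Fin d) → ℝ := fun u => |h u - fstar u| with hH
    have hHm : Measurable H := (hmeas.sub hfm).abs
    have hH0 : ∀ z, 0 ≤ H z := fun z => abs_nonneg _
    have hHb : ∀ z, H z ≤ 2 := by
      intro z
      have h1 := abs_sub (h z) (fstar z)
      calc H z ≤ |h z| + |fstar z| := abs_sub _ _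
        _ ≤ 1 + 1 := add_le_add (hbd z) (hfb z)
        _ = 2 := by norm_num
    have hHbabs : ∀ z, |H z| ≤ 2 := fun z => by
      rw [hH, abs_abs]; exact hHb z
    have hHv : ∀ z, z ∉ U → H z = 0 := fun z hz => by
      have hzz := hvanish z hz
      simp [hH, hzz.1, hzz.2]
    have hcontH : Continuous (gaussSmooth d σ H) :=
      gaussSmooth_continuous hd hσ hHm hHbabs
    -- pointwise bounds
    have hptH : ∀ x : EuclideanSpace ℝ (Fin d), |ht x - ft x| ≤ gaussSmooth d σ H x := by
      intro x
      rw [hht, hft, gaussSmooth_sub hσ hmeas hbd hfm hfb x]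
      exact abs_gaussSmooth_le_smooth_abs hσ x
    have hpt2a : ∀ x : EuclideanSpace ℝ (Fin d), |ft x - fstar x| ≤ L * (2 * σ * Real.sqrt d) :=
      fun x => smooth_lipschitz_err hd hσ hL hfm hfb hfLip x
    -- integrability on U
    have hbddInt : ∀ {g : EuclideanSpace ℝ (Fin d) → ℝ}, AEStronglyMeasurable g volume →
        ∀ C : ℝ, (∀ z, |g z| ≤ C) → IntegrableOn g U volume := by
      intro g hg C hC
      exact Measure.integrableOn_of_bounded hUfin.ne hg
        (Filter.Eventually.of_forall fun z => by rw [Real.norm_eq_abs]; exact hC z)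
    have hi1 : IntegrableOn (fun x => |ht x - ft x|) U volume :=
      hbddInt ((hconth.sub hcontf).abs.aestronglyMeasurable) 2
        (fun z => by
          rw [abs_abs]
          calc |ht z - ft z| ≤ |ht z| + |ft z| := abs_sub _ _
            _ ≤ 1 + 1 := add_le_add (abs_gaussSmooth_le hσ hmeas hbd z)
                (abs_gaussSmooth_le hσ hfm hfb z)
            _ = 2 := by norm_num)
    have hi2 : IntegrableOn (fun x => |ft x - fstar x|) U volume :=
      hbddInt ((hcontf.sub hfcont).abs.aestronglyMeasurable) 2
        (fun z => by
          rw [abs_abs]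
          calc |ft z - fstar z| ≤ |ft z| + |fstar z| := abs_sub _ _
            _ ≤ 1 + 1 := add_le_add (abs_gaussSmooth_le hσ hfm hfb z) (hfb z)
            _ = 2 := by norm_num)
    have hi0 : IntegrableOn (fun x => |ht x - fstar x|) U volume :=
      hbddInt ((hconth.sub hfcont).abs.aestronglyMeasurable) 2
        (fun z => by
          rw [abs_abs]
          calc |ht z - fstar z| ≤ |ht z| + |fstar z| := abs_sub _ _
            _ ≤ 1 + 1 := add_le_add (abs_gaussSmooth_le hσ hmeas hbd z) (hfb z)
            _ = 2 := by norm_num)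
    have hiH : IntegrableOn (gaussSmooth d σ H) U volume :=
      hbddInt (hcontH.aestronglyMeasurable) 2
        (fun z => abs_gaussSmooth_le hσ hHm hHbabs z)
    -- main chain of inequalities
    have step1 : ∫ x in U, |ht x - fstar x|
        ≤ (∫ x in U, |ht x - ft x|) + ∫ x in U, |ft x - fstar x| := by
      rw [← integral_add hi1 hi2]
      exact integral_mono hi0 (hi1.add hi2) fun x => abs_sub_le _ _ _
    have step2 : ∫ x in U, |ht x - ft x| ≤ ∫ x in U, H x := by
      calc ∫ x in U, |ht x - ft x| ≤ ∫ x in U, gaussSmooth d σ H x :=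
            integral_mono hi1 hiH fun x => hptH x
        _ ≤ ∫ x in U, H x :=
            setIntegral_gaussSmooth_le hσ hU hUfin hHm hH0 hHb hHv
              (hcontH.aestronglyMeasurable.restrict)
    have step3 : ∫ x in U, |ft x - fstar x| ≤ (volume U).toReal * (L * (2 * σ * Real.sqrt d)) := by
      have hconst : IntegrableOn (fun _ : EuclideanSpace ℝ (Fin d) => L * (2 * σ * Real.sqrt d)) U volume :=
        integrableOn_const hUfin.ne
      calc ∫ x in U, |ft x - fstar x| ≤ ∫ _ in U, L * (2 * σ * Real.sqrt d) :=
            integral_mono hi2 hconst fun x => hpt2a x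
        _ = (volume U).toReal * (L * (2 * σ * Real.sqrt d)) := by
            rw [setIntegral_const, smul_eq_mul, measureReal_def]
    -- assemble
    have hV : 0 < (volume U).toReal := ENNReal.toReal_pos hUpos.ne' hUfin.ne
    unfold l1Dist
    have hfinal : ∫ x in U, |ht x - fstar x|
        ≤ (∫ x in U, |h x - fstar x|) + (volume U).toReal * (L * (2 * σ * Real.sqrt d)) := by
      have : ∫ x in U, H x = ∫ x in U, |h x - fstar x| := rfl
      linarith [step1, step2, step3, this ▸ step2]
    have hmul := mul_le_mul_of_nonneg_left hfinal
      (by positivity : (0:ℝ) ≤ 1 / (volume U).toReal)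
    calc 1 / (volume U).toReal * ∫ x in U, |ht x - fstar x|
        ≤ 1 / (volume U).toReal *
            ((∫ x in U, |h x - fstar x|) + (volume U).toReal * (L * (2 * σ * Real.sqrt d))) :=
          hmul
      _ = 1 / (volume U).toReal * (∫ x in U, |h x - fstar x|)
          + (1 / (volume U).toReal * (volume U).toReal) * (L * (2 * σ * Real.sqrt d)) := by
          ring
      _ = 1 / (volume U).toReal * (∫ x in U, |h x - fstar x|) + 2 * L * σ * Real.sqrt d := by
          rw [one_div_mul_cancel hV.ne']
          ring
end
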